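/- arXiv:1907.09400 — 3 statements merged into one kernel-verified Lean document; each statement's English description precedes it below -/
import Mathlib

section
/- Let (X,d) be a compact metric space and f : X → X a continuous map. Let x, y ∈ X and suppose there exist sequences of natural numbers (n_k), (m_k) with m_k → ∞ and n_k/(n_k + m_k) → 0 as k → ∞, and a sequence of positive reals ε_k → 0, such that for every k and every 0 ≤ i ≤ m_k one has d(f^{n_k + i} x, f^{n_k + i} y) < ε_k. Then for every t > 0, limsup_{n→∞} (1/n) #{0 ≤ i ≤ n-1 : d(f^i x, f^i y) < t} = 1; that is, the first (upper-density) condition in the definition of a DC1-scrambled pair holds for x and y. -/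
open Filter Topology MeasureTheory
open scoped Matrix.Norms.L2Operator

noncomputable section

/-- The cocycle `A(x,n) = A(f^[n-1] x) ⋯ A(f x) A(x)` induced by a matrix function
`A : X → GL(m,ℝ)` over a map `f : X → X`. -/
def cocycle {X : Type*} {m : ℕ} (f : X → X) (A : X → Matrix.GeneralLinearGroup (Fin m) ℝ)
    (x : X) : ℕ → Matrix (Fin m) (Fin m) ℝ
  | 0 => 1
  | n + 1 => (A (f^[n] x) : Matrix (Fin m) (Fin m) ℝ) * cocycle f A x n

/-- A point is Max-Lyapunov-regular for `A` if `(1/n) log ‖A(x,n)‖` converges (operator norm). -/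
def MaxLyapunovRegular {X : Type*} {m : ℕ} (f : X → X)
    (A : X → Matrix.GeneralLinearGroup (Fin m) ℝ) (x : X) : Prop :=
  ∃ χ : ℝ, Filter.Tendsto (fun n : ℕ => (1 / (n : ℝ)) * Real.log ‖cocycle f A x n‖)
    Filter.atTop (nhds χ)

/-- The set of Max-Lyapunov-irregular points. -/
def MLI {X : Type*} {m : ℕ} (f : X → X) (A : X → Matrix.GeneralLinearGroup (Fin m) ℝ) :
    Set X := {x | ¬ MaxLyapunovRegular f A x}

/-- A point is (forward) Lyapunov-regular for `A` if there are `r ≤ m`, exponents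
`χ_1 < ⋯ < χ_r` and a direct sum decomposition `ℝ^m = G_1 ⊕ ⋯ ⊕ G_r` into nonzero subspaces
realizing the exponents as limits `(1/n) log ‖A(x,n) v‖ → χ_i` for nonzero `v ∈ G_i`. -/
def LyapunovRegular {X : Type*} {m : ℕ} (f : X → X)
    (A : X → Matrix.GeneralLinearGroup (Fin m) ℝ) (x : X) : Prop :=
  ∃ r : ℕ, r ≤ m ∧ ∃ χ : Fin r → ℝ, StrictMono χ ∧
    ∃ G : Fin r → Submodule ℝ (Fin m → ℝ), DirectSum.IsInternal G ∧ (∀ i, G i ≠ ⊥) ∧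
      ∀ i : Fin r, ∀ v ∈ G i, v ≠ 0 →
        Filter.Tendsto (fun n : ℕ => (1 / (n : ℝ)) * Real.log ‖(cocycle f A x n).mulVec v‖)
          Filter.atTop (nhds (χ i))

/-- The set of Lyapunov-irregular points. -/
def LI {X : Type*} {m : ℕ} (f : X → X) (A : X → Matrix.GeneralLinearGroup (Fin m) ℝ) :
    Set X := {x | ¬ LyapunovRegular f A x}

/-- `A` is `α`-Hölder continuous. -/
def HolderMat {X : Type*} [MetricSpace X] {m : ℕ} (α : ℝ)
    (A : X → Matrix.GeneralLinearGroup (Fin m) ℝ) : Prop :=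
  ∃ C > 0, ∀ x y : X,
    ‖(A x : Matrix (Fin m) (Fin m) ℝ) - (A y : Matrix (Fin m) (Fin m) ℝ)‖ ≤ C * dist x y ^ α

/-- The orbit segments `x, …, f^n x` and `y, …, f^n y` are exponentially `δ`-close with
exponent `λ`. -/
def ExpClose {X : Type*} [MetricSpace X] (f : X → X) (lam δ : ℝ) (n : ℕ) (x y : X) : Prop :=
  ∀ i ≤ n, dist (f^[i] x) (f^[i] y) < δ * Real.exp (-lam * (min i (n - i) : ℕ))

/-- The exponential specification property with exponent `lam`, with a prescribed gap
function `N : ℝ → ℕ` (for each precision `δ > 0`, `N δ` is the required gap). -/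
def ExpSpecificationWith {X : Type*} [MetricSpace X] (f : X → X) (lam : ℝ) (N : ℝ → ℕ) : Prop :=
  ∀ δ > 0, ∀ (k : ℕ) (x : Fin (k + 1) → X) (M : Fin (k + 1) → ℕ) (T : Fin (k + 1) → ℕ),
    T 0 = 0 → (∀ j : Fin k, T j.castSucc + M j.castSucc + N δ ≤ T j.succ) →
    ∃ g : X, ∀ j : Fin (k + 1), ExpClose f lam δ (M j) (x j) (f^[T j] g)

/-- The exponential specification property with exponent `lam`. -/
def ExpSpecification {X : Type*} [MetricSpace X] (f : X → X) (lam : ℝ) : Prop :=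
  ∃ N : ℝ → ℕ, ExpSpecificationWith f lam N

/-- `#{0 ≤ i ≤ n-1 : d(f^i x, f^i y) < t}`. -/
def dcCount {X : Type*} [MetricSpace X] (f : X → X) (x y : X) (t : ℝ) (n : ℕ) : ℕ :=
  ((Finset.range n).filter fun i => dist (f^[i] x) (f^[i] y) < t).card

/-- A DC1-scrambled pair. -/
def DC1Pair {X : Type*} [MetricSpace X] (f : X → X) (x y : X) : Prop :=
  (∀ t > 0,
    Filter.atTop.limsup (fun n : ℕ => (dcCount f x y t n : ℝ) / n) = 1) ∧
  ∃ t₀ > 0, Filter.atTop.liminf (fun n : ℕ => (dcCount f x y t₀ n : ℝ) / n) = 0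

/-- A DC1-scrambled set: every pair of distinct points in `S` is DC1-scrambled. -/
def DC1ScrambledSet {X : Type*} [MetricSpace X] (f : X → X) (S : Set X) : Prop :=
  S.Pairwise (DC1Pair f)

/-- The `i`-th compound matrix: the matrix of the induced map `∧^i B` on the `i`-th exterior
power `∧^i ℝ^m` in the standard basis `{e_S : S ⊆ {1,…,m}, #S = i}`; its entries are the
`i × i` minors of `B`. -/
def compound {m : ℕ} (i : ℕ) (B : Matrix (Fin m) (Fin m) ℝ) :
    Matrix {s : Finset (Fin m) // s.card = i} {s : Finset (Fin m) // s.card = i} ℝ :=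
  Matrix.of fun s t =>
    (B.submatrix (fun a : Fin i => ((s.1.orderIsoOfFin s.2 a : Fin m)))
      (fun b : Fin i => ((t.1.orderIsoOfFin t.2 b : Fin m)))).det

end

/-- If the orbits of `x` and `y` are `ε_k`-close (with `ε_k → 0`) along
windows `[n_k, n_k + m_k]` with `m_k → ∞` and `n_k/(n_k+m_k) → 0`, then for every `t > 0`
the upper density of times `i` with `d(f^i x, f^i y) < t` equals `1` (the first condition
in the definition of a DC1-scrambled pair). -/
theorem dc1_upper_density_one_of_window_closeness
    {X : Type*} [MetricSpace X] [CompactSpace X] (f : X → X) (hf : Continuous f)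
    (x y : X) (n m : ℕ → ℕ)
    (hm : Filter.Tendsto m Filter.atTop Filter.atTop)
    (hratio : Filter.Tendsto (fun k => (n k : ℝ) / ((n k : ℝ) + (m k : ℝ)))
      Filter.atTop (nhds 0))
    (ε : ℕ → ℝ) (hε : ∀ k, 0 < ε k) (hε0 : Filter.Tendsto ε Filter.atTop (nhds 0))
    (hclose : ∀ k, ∀ i ≤ m k, dist (f^[n k + i] x) (f^[n k + i] y) < ε k) :
    ∀ t > 0,
      Filter.atTop.limsup (fun N : ℕ => (dcCount f x y t N : ℝ) / N) = 1 := by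
  intro t ht
  set u : ℕ → ℝ := fun N : ℕ => (dcCount f x y t N : ℝ) / N with hu
  have hle1 : ∀ N, u N ≤ 1 := by
    intro N
    apply div_le_one_of_le₀
    · exact_mod_cast Nat.le_trans (Finset.card_filter_le _ _) (le_of_eq (Finset.card_range N))
    · positivity
  have hnn : ∀ N, 0 ≤ u N := by
    intro N; positivity
  have hbdd : Filter.IsBoundedUnder (· ≤ ·) Filter.atTop u :=
    Filter.isBoundedUnder_of ⟨1, hle1⟩
  have hcobdd : Filter.IsCoboundedUnder (· ≤ ·) Filter.atTop u :=
    Filter.IsBoundedUnder.isCoboundedUnder_le (Filter.isBoundedUnder_of ⟨0, hnn⟩)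
  have hfreq : ∀ a : ℝ, a < 1 → ∃ᶠ N in Filter.atTop, a ≤ u N := by
    intro a ha
    rw [Filter.frequently_atTop]
    intro M
    have h1 : ∀ᶠ k in Filter.atTop, ε k < t := hε0.eventually_lt_const ht
    have h2 : ∀ᶠ k in Filter.atTop, M + 1 ≤ m k := hm.eventually_ge_atTop (M + 1)
    have h3 : ∀ᶠ k in Filter.atTop, (n k : ℝ) / ((n k : ℝ) + (m k : ℝ)) < 1 - a := by
      have := hratio.eventually (eventually_lt_nhds (by linarith : (0:ℝ) < 1 - a))
      exact this
    obtain ⟨k, ⟨hk1, hk2⟩, hk3⟩ := ((h1.and h2).and h3).exists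
    refine ⟨n k + m k + 1, by omega, ?_⟩
    set N := n k + m k + 1 with hN
    -- count bound
    have hsub : (Finset.range (m k + 1)).image (fun j => n k + j) ⊆
        (Finset.range N).filter (fun i => dist (f^[i] x) (f^[i] y) < t) := by
      intro i hi
      simp only [Finset.mem_image, Finset.mem_range] at hi
      obtain ⟨j, hj, rfl⟩ := hi
      refine Finset.mem_filter.mpr ⟨Finset.mem_range.mpr (by omega), ?_⟩
      exact lt_trans (hclose k j (by omega)) hk1
    have hcard : m k + 1 ≤ dcCount f x y t N := by
      calc m k + 1 = ((Finset.range (m k + 1)).image (fun j => n k + j)).card := by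
            rw [Finset.card_image_of_injective _ (fun a b h => by omega), Finset.card_range]
        _ ≤ _ := Finset.card_le_card hsub
    have hNpos : (0:ℝ) < (N : ℝ) := by positivity
    have hdenom : (0:ℝ) < (n k : ℝ) + (m k : ℝ) := by
      have : (1:ℝ) ≤ (m k : ℝ) := by exact_mod_cast Nat.one_le_iff_ne_zero.mpr (by omega)
      positivity
    have hNcast : (N : ℝ) = (n k : ℝ) + (m k : ℝ) + 1 := by push_cast [hN]; ring
    have key : a ≤ ((m k : ℝ) + 1) / N := by
      rw [le_div_iff₀ hNpos]
      have h4 : (n k : ℝ) / N ≤ (n k : ℝ) / ((n k : ℝ) + (m k : ℝ)) := by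
        apply div_le_div_of_nonneg_left (by positivity) hdenom
        rw [hNcast]; linarith
      rw [div_lt_iff₀ hdenom] at hk3
      rw [div_le_div_iff₀ hNpos hdenom] at h4
      nlinarith
    refine le_trans key ?_
    have hcard' : ((m k : ℝ) + 1) ≤ (dcCount f x y t N : ℝ) := by exact_mod_cast hcard
    simp only [hu]
    gcongr
  have hge : (1:ℝ) ≤ Filter.atTop.limsup u := by
    by_contra h
    push_neg at h
    obtain ⟨a, hlt, ha1⟩ := exists_between h
    have := Filter.le_limsup_of_frequently_le (hfreq a ha1) hbdd
    linarith
  have hle : Filter.atTop.limsup u ≤ 1 :=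
    Filter.limsup_le_of_le hcobdd (Filter.Eventually.of_forall hle1)
  linarith
end

section
/- Let X be a compact metric space and f : X → X a homeomorphism with the exponential specification property with exponent λ > 0; for δ > 0 let N(δ) be a corresponding constant from the definition. Fix δ > 0 and set δ_k = δ/2^k for k ≥ 1. Let (x_k)_{k≥1} be any sequence of points in X, (M_k)_{k≥1} any sequence of natural numbers, and (T_k)_{k≥1} natural numbers with T_1 = 0 and T_{k+1} ≥ T_k + M_k + N(δ_{k+1}) for all k ≥ 1. Then there exists a point g ∈ X such that for every k ≥ 1 and every 0 ≤ i ≤ M_k, d(f^{T_k + i} g, f^i x_k) ≤ 2 δ_k e^{-λ min(i, M_k - i)}. (In other words, a single point g exponentially shadows the infinite sequence of prescribed orbit segments, with precision 2δ_k on the k-th segment.) -/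
open Filter Topology MeasureTheory
open scoped Matrix.Norms.L2Operator

/-- For a homeomorphism with exponential specification (with gap function
`N : ℝ → ℕ`), any infinite sequence of orbit segments `x_k, …, f^{M_k} x_k`, placed at times
`T_k` with `T_1 = 0` and `T_{k+1} ≥ T_k + M_k + N(δ/2^{k+1})`, is exponentially shadowed by
a single point `g`, with precision `2·δ/2^k` on the `k`-th segment. -/
theorem exists_point_shadowing_infinite_segments
    {X : Type*} [MetricSpace X] [CompactSpace X] (f : X ≃ₜ X) (lam : ℝ) (hlam : 0 < lam)
    (N : ℝ → ℕ) (hN : ExpSpecificationWith ⇑f lam N)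
    (δ : ℝ) (hδ : 0 < δ) (x : ℕ → X) (M : ℕ → ℕ) (T : ℕ → ℕ)
    (hT1 : T 1 = 0)
    (hT : ∀ k, 1 ≤ k → T k + M k + N (δ / 2 ^ (k + 1)) ≤ T (k + 1)) :
    ∃ g : X, ∀ k, 1 ≤ k → ∀ i ≤ M k,
      dist (f^[T k + i] g) (f^[i] (x k)) ≤
        2 * (δ / 2 ^ k) * Real.exp (-lam * (min i (M k - i) : ℕ)) := by
  have hf : Continuous ⇑f := f.continuous
  have hδk : ∀ k : ℕ, (0:ℝ) < δ / 2 ^ k := fun k => div_pos hδ (by positivity)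
  -- step: given a point y, find z shadowing the orbit of y of length T k + M k and then
  -- the segment of x (k+1), with precision δ/2^(k+1)
  have step : ∀ k : ℕ, 1 ≤ k → ∀ y : X, ∃ z : X,
      (∀ i ≤ T k + M k, dist (f^[i] z) (f^[i] y)
        < δ / 2 ^ (k+1) * Real.exp (-lam * (min i (T k + M k - i) : ℕ))) ∧
      (∀ i ≤ M (k+1), dist (f^[T (k+1) + i] z) (f^[i] (x (k+1)))
        < δ / 2 ^ (k+1) * Real.exp (-lam * (min i (M (k+1) - i) : ℕ))) := by
    intro k hk y
    obtain ⟨z, hz⟩ := hN (δ / 2 ^ (k+1)) (hδk (k+1)) 1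
      ![y, x (k+1)] ![T k + M k, M (k+1)] ![0, T (k+1)]
      rfl (by
        intro j
        fin_cases j
        simpa using hT k hk)
    refine ⟨z, ?_, ?_⟩
    · intro i hi
      have h0 := hz 0 i hi
      simpa [dist_comm] using h0
    · intro i hi
      have h1 := hz 1 i hi
      simp only [Matrix.cons_val_one, Matrix.head_cons, Matrix.cons_val_zero] at h1
      rw [← Function.iterate_add_apply, Nat.add_comm i (T (k+1))] at h1
      simpa [dist_comm] using h1
  have base : ∃ z : X, ∀ i ≤ M 1, dist (f^[T 1 + i] z) (f^[i] (x 1))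
      < δ / 2 ^ 1 * Real.exp (-lam * (min i (M 1 - i) : ℕ)) := by
    obtain ⟨z, hz⟩ := hN (δ / 2 ^ 1) (hδk 1) 0 (fun _ => x 1) (fun _ => M 1) (fun _ => 0)
      rfl (fun j => j.elim0)
    refine ⟨z, fun i hi => ?_⟩
    have h0 := hz 0 i hi
    rw [hT1]
    simpa [dist_comm] using h0
  choose F hF1 hF2 using step
  obtain ⟨g1, hg1⟩ := base
  -- the recursively defined sequence of shadowing points
  let G : ℕ → X := fun n => Nat.rec g1 (fun n gn => F (n+1) (Nat.le_add_left 1 n) gn) n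
  have hGs : ∀ n : ℕ, G (n+1) = F (n+1) (Nat.le_add_left 1 n) (G n) := fun n => rfl
  have segBound : ∀ n : ℕ, ∀ i ≤ M (n+1),
      dist (f^[T (n+1) + i] (G n)) (f^[i] (x (n+1)))
        < δ / 2 ^ (n+1) * Real.exp (-lam * (min i (M (n+1) - i) : ℕ)) := by
    intro n
    cases n with
    | zero => exact hg1
    | succ m =>
      rw [hGs m]
      exact hF2 (m+1) (Nat.le_add_left 1 m) (G m)
  have adjBound : ∀ n : ℕ, ∀ i ≤ T (n+1) + M (n+1),
      dist (f^[i] (G (n+1))) (f^[i] (G n))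
        < δ / 2 ^ (n+2) * Real.exp (-lam * (min i (T (n+1) + M (n+1) - i) : ℕ)) := by
    intro n
    rw [hGs n]
    exact hF1 (n+1) (Nat.le_add_left 1 n) (G n)
  -- monotonicity of k ↦ T k + M k for k ≥ 1
  have TMmono : ∀ k, 1 ≤ k → ∀ j, k ≤ j → T k + M k ≤ T j + M j := by
    intro k hk j hkj
    induction j, hkj using Nat.le_induction with
    | base => exact le_rfl
    | succ j hkj ih =>
      calc T k + M k ≤ T j + M j := ih
        _ ≤ T j + M j + N (δ / 2 ^ (j+1)) := Nat.le_add_right _ _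
        _ ≤ T (j+1) := hT j (hk.trans hkj)
        _ ≤ T (j+1) + M (j+1) := Nat.le_add_right _ _
  -- the key estimate, by induction on p
  have claim : ∀ m : ℕ, ∀ i ≤ M (m+1), ∀ p : ℕ,
      dist (f^[T (m+1) + i] (G (m + p))) (f^[i] (x (m+1)))
        ≤ (2 - (2:ℝ)⁻¹ ^ p) * (δ / 2 ^ (m+1))
            * Real.exp (-lam * (min i (M (m+1) - i) : ℕ)) := by
    intro m i hi p
    induction p with
    | zero =>
      have h := segBound m i hi
      simp only [Nat.add_zero, pow_zero] at *
      nlinarith [h]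
    | succ p ih =>
      have hepos : (0:ℝ) < Real.exp (-lam * (min i (M (m+1) - i) : ℕ)) := Real.exp_pos _
      set e := Real.exp (-lam * (min i (M (m+1) - i) : ℕ)) with he
      have hsum : m + (p + 1) = (m + p) + 1 := by omega
      rw [hsum]
      have htle : T (m+1) + i ≤ T (m+p+1) + M (m+p+1) := by
        have h1 : T (m+1) + M (m+1) ≤ T (m+p+1) + M (m+p+1) :=
          TMmono (m+1) (Nat.le_add_left 1 m) (m+p+1) (by omega)
        omega
      have hadj := adjBound (m+p) (T (m+1) + i) htle
      -- compare the exponents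
      have hminle : min i (M (m+1) - i) ≤ min (T (m+1) + i) (T (m+p+1) + M (m+p+1) - (T (m+1) + i)) := by
        have h1 : T (m+1) + M (m+1) ≤ T (m+p+1) + M (m+p+1) :=
          TMmono (m+1) (Nat.le_add_left 1 m) (m+p+1) (by omega)
        omega
      have hexp : Real.exp (-lam *
            (min (T (m+1) + i) (T (m+p+1) + M (m+p+1) - (T (m+1) + i)) : ℕ)) ≤ e := by
        rw [he]
        apply Real.exp_le_exp.mpr
        have hcast : ((min i (M (m+1) - i) : ℕ) : ℝ)
            ≤ ((min (T (m+1) + i) (T (m+p+1) + M (m+p+1) - (T (m+1) + i)) : ℕ) : ℝ) := by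
          exact_mod_cast hminle
        nlinarith
      have hδpos : (0:ℝ) < δ / 2 ^ (m+p+2) := hδk _
      have hfirst : dist (f^[T (m+1) + i] (G (m+p+1))) (f^[T (m+1) + i] (G (m+p)))
          ≤ (δ / 2 ^ (m+p+2)) * e := by
        calc dist (f^[T (m+1) + i] (G (m+p+1))) (f^[T (m+1) + i] (G (m+p)))
            ≤ δ / 2 ^ (m+p+2) * Real.exp (-lam *
              (min (T (m+1) + i) (T (m+p+1) + M (m+p+1) - (T (m+1) + i)) : ℕ)) :=
              le_of_lt (by exact_mod_cast hadj)
          _ ≤ (δ / 2 ^ (m+p+2)) * e :=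
              mul_le_mul_of_nonneg_left hexp (le_of_lt hδpos)
      have hsplit : (δ: ℝ) / 2 ^ (m+p+2) = (2:ℝ)⁻¹ ^ (p+1) * (δ / 2 ^ (m+1)) := by
        rw [show m+p+2 = (m+1)+(p+1) from by omega, pow_add, inv_pow,
          div_mul_eq_div_div, div_eq_mul_inv (δ / 2^(m+1)), mul_comm]
      have htri : dist (f^[T (m+1) + i] (G (m+p+1))) (f^[i] (x (m+1)))
          ≤ dist (f^[T (m+1) + i] (G (m+p+1))) (f^[T (m+1) + i] (G (m+p)))
            + dist (f^[T (m+1) + i] (G (m+p))) (f^[i] (x (m+1))) := dist_triangle _ _ _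
      have hkey : (2:ℝ)⁻¹ ^ (p+1) * (δ / 2 ^ (m+1)) * e
            + (2 - (2:ℝ)⁻¹ ^ p) * (δ / 2 ^ (m+1)) * e
          = (2 - (2:ℝ)⁻¹ ^ (p+1)) * (δ / 2 ^ (m+1)) * e := by
        rw [pow_succ]
        ring
      rw [hsplit] at hfirst
      linarith [ih]
  -- the sequence G is Cauchy
  have hcauchy : CauchySeq G := by
    apply cauchySeq_of_le_geometric (1/2 : ℝ) δ (by norm_num)
    intro n
    have h := adjBound n 0 (Nat.zero_le _)
    simp only [Nat.min_self, Nat.zero_min, Nat.cast_zero, mul_zero, Real.exp_zero,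
      mul_one] at h
    rw [dist_comm]
    have h0 : dist (G (n+1)) (G n) < δ / 2 ^ (n+2) := by simpa using h
    have : δ / 2 ^ (n+2) ≤ δ * (1/2) ^ n := by
      rw [div_le_iff₀ (by positivity)]
      have : (1/2 : ℝ) ^ n * 2 ^ (n+2) = 4 := by
        rw [pow_add]
        field_simp
        rw [mul_assoc, ← mul_pow]; norm_num
      nlinarith [this, hδ.le]
    linarith
  obtain ⟨g, hg⟩ := cauchySeq_tendsto_of_complete hcauchy
  refine ⟨g, ?_⟩
  intro k hk i hi
  obtain ⟨m, rfl⟩ : ∃ m, k = m + 1 := ⟨k - 1, by omega⟩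
  have hsub : Filter.Tendsto (fun p => G (m + p)) Filter.atTop (nhds g) :=
    hg.comp (Filter.tendsto_atTop_mono (fun p => Nat.le_add_left p m) Filter.tendsto_id)
  have hdist : Filter.Tendsto
      (fun p => dist (f^[T (m+1) + i] (G (m + p))) (f^[i] (x (m+1))))
      Filter.atTop (nhds (dist (f^[T (m+1) + i] g) (f^[i] (x (m+1))))) :=
    (((hf.iterate (T (m+1) + i)).tendsto g).comp hsub).dist tendsto_const_nhds
  refine le_of_tendsto hdist (Filter.Eventually.of_forall fun p => ?_)
  have h := claim m i hi p
  have hepos : (0:ℝ) < Real.exp (-lam * (min i (M (m+1) - i) : ℕ)) := Real.exp_pos _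
  have hq : (0:ℝ) ≤ (2:ℝ)⁻¹ ^ p := by positivity
  nlinarith [h, mul_nonneg (mul_nonneg hq (hδk (m+1)).le) hepos.le]
end

section
/- Let X be a compact metric space, f : X → X a continuous map, A : X → GL(m,ℝ) a continuous matrix function, and set C = max_{x ∈ X} max(‖A(x)‖, ‖A(x)^{-1}‖). Suppose x ∈ X and there exist real numbers a > b, a constant D > 0, sequences of natural numbers (P_k), (L_k) and (Q_k), (H_k) with L_k → ∞, H_k → ∞, P_k/(P_k + L_k) → 0 and Q_k/(Q_k + H_k) → 0 as k → ∞, such that for all k: ‖A(f^{P_k} x, L_k)‖ ≤ D e^{L_k b} and ‖A(f^{Q_k} x, H_k)‖ ≥ D^{-1} e^{H_k a}. Then the sequence (1/n) log‖A(x,n)‖ diverges as n → ∞ (indeed limsup_{n} (1/n) log‖A(x,n)‖ ≥ a > b ≥ liminf_n (1/n) log‖A(x,n)‖ along the subsequences n = Q_k + H_k and n = P_k + L_k respectively); in particular x belongs to the Max-Lyapunov-irregular set MLI(A,f). -/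
open Filter Topology MeasureTheory
open scoped Matrix.Norms.L2Operator

section AuxCocycle

open scoped Matrix.Norms.L2Operator

variable {X : Type*} {m : ℕ} (f : X → X) (A : X → Matrix.GeneralLinearGroup (Fin m) ℝ) (x : X)

lemma cocycle_add (p l : ℕ) :
    cocycle f A x (p + l) = cocycle f A (f^[p] x) l * cocycle f A x p := by
  induction l with
  | zero => simp [cocycle]
  | succ l ih =>
    have h1 : p + (l + 1) = (p + l) + 1 := by ring
    have h2 : f^[p + l] x = f^[l] (f^[p] x) := by
      rw [Nat.add_comm, Function.iterate_add_apply]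
    rw [h1]
    show (A (f^[p + l] x) : Matrix (Fin m) (Fin m) ℝ) * cocycle f A x (p + l) = _
    rw [ih, h2]
    show _ = ((A (f^[l] (f^[p] x)) : Matrix (Fin m) (Fin m) ℝ) *
      cocycle f A (f^[p] x) l) * cocycle f A x p
    rw [mul_assoc]

/-- Inverse of the cocycle, built from the inverses of `A`. -/
noncomputable def invCocycle : ℕ → Matrix (Fin m) (Fin m) ℝ
  | 0 => 1
  | n + 1 => invCocycle n * (((A (f^[n] x))⁻¹ : Matrix.GeneralLinearGroup (Fin m) ℝ) :
      Matrix (Fin m) (Fin m) ℝ)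

lemma cocycle_mul_invCocycle (n : ℕ) :
    cocycle f A x n * invCocycle f A x n = 1 := by
  induction n with
  | zero => simp [cocycle, invCocycle]
  | succ n ih =>
    show ((A (f^[n] x) : Matrix (Fin m) (Fin m) ℝ) * cocycle f A x n) *
      (invCocycle f A x n * (((A (f^[n] x))⁻¹ : Matrix.GeneralLinearGroup (Fin m) ℝ) :
        Matrix (Fin m) (Fin m) ℝ)) = 1
    calc ((A (f^[n] x) : Matrix (Fin m) (Fin m) ℝ) * cocycle f A x n) *
        (invCocycle f A x n * (((A (f^[n] x))⁻¹ : Matrix.GeneralLinearGroup (Fin m) ℝ) :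
          Matrix (Fin m) (Fin m) ℝ))
        = (A (f^[n] x) : Matrix (Fin m) (Fin m) ℝ) *
            ((cocycle f A x n * invCocycle f A x n) *
              (((A (f^[n] x))⁻¹ : Matrix.GeneralLinearGroup (Fin m) ℝ) :
                Matrix (Fin m) (Fin m) ℝ)) := by
          simp only [mul_assoc]
      _ = (A (f^[n] x) : Matrix (Fin m) (Fin m) ℝ) *
            (((A (f^[n] x))⁻¹ : Matrix.GeneralLinearGroup (Fin m) ℝ) :
              Matrix (Fin m) (Fin m) ℝ) := by rw [ih, one_mul]
      _ = 1 := Units.mul_inv _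

end AuxCocycle

/-- With `C = max_{x ∈ X} max(‖A(x)‖, ‖A(x)⁻¹‖)`, if along sparse windows the
cocycle norm is at most `D e^{L_k b}` (resp. at least `D⁻¹ e^{H_k a}`) with `a > b`, then
`limsup (1/n) log‖A(x,n)‖ ≥ a > b ≥ liminf (1/n) log‖A(x,n)‖`, so the sequence diverges; in
particular `x ∈ MLI(A,f)`. -/
theorem mem_MLI_of_window_norm_bounds
    {X : Type*} [MetricSpace X] [CompactSpace X] {m : ℕ} (f : X → X) (hf : Continuous f)
    (A : X → Matrix.GeneralLinearGroup (Fin m) ℝ)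
    (hA : Continuous fun x => (A x : Matrix (Fin m) (Fin m) ℝ))
    (C : ℝ)
    (hC : IsGreatest (Set.range fun y : X =>
      max ‖(A y : Matrix (Fin m) (Fin m) ℝ)‖ ‖((A y)⁻¹ : Matrix (Fin m) (Fin m) ℝ)‖) C)
    (x : X) (a b : ℝ) (hab : b < a) (D : ℝ) (hD : 0 < D)
    (P L Q H : ℕ → ℕ)
    (hL : Filter.Tendsto L Filter.atTop Filter.atTop)
    (hH : Filter.Tendsto H Filter.atTop Filter.atTop)
    (hPL : Filter.Tendsto (fun k => (P k : ℝ) / ((P k : ℝ) + (L k : ℝ)))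
      Filter.atTop (nhds 0))
    (hQH : Filter.Tendsto (fun k => (Q k : ℝ) / ((Q k : ℝ) + (H k : ℝ)))
      Filter.atTop (nhds 0))
    (hupper : ∀ k, ‖cocycle f A (f^[P k] x) (L k)‖ ≤ D * Real.exp ((L k : ℝ) * b))
    (hlower : ∀ k, D⁻¹ * Real.exp ((H k : ℝ) * a) ≤ ‖cocycle f A (f^[Q k] x) (H k)‖) :
    a ≤ Filter.atTop.limsup (fun n : ℕ => (1 / (n : ℝ)) * Real.log ‖cocycle f A x n‖) ∧
    Filter.atTop.liminf (fun n : ℕ => (1 / (n : ℝ)) * Real.log ‖cocycle f A x n‖) ≤ b ∧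
    x ∈ MLI f A := by
  classical
  -- kill the degenerate case `m = 0`
  rcases Nat.eq_zero_or_pos m with hm0 | hm0
  · exfalso
    subst hm0
    have h0 : cocycle f A (f^[Q 0] x) (H 0) = 0 := by
      ext i j; exact i.elim0
    have h1 := hlower 0
    rw [h0, norm_zero] at h1
    have h2 : (0:ℝ) < D⁻¹ * Real.exp ((H 0 : ℝ) * a) := by positivity
    linarith
  haveI : Nonempty (Fin m) := ⟨⟨0, hm0⟩⟩
  -- basic facts about `C`
  have hCA : ∀ y : X, ‖(A y : Matrix (Fin m) (Fin m) ℝ)‖ ≤ C := fun y =>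
    le_trans (le_max_left _ _) (hC.2 ⟨y, rfl⟩)
  have hCAi : ∀ y : X,
      ‖(((A y)⁻¹ : Matrix.GeneralLinearGroup (Fin m) ℝ) : Matrix (Fin m) (Fin m) ℝ)‖ ≤ C :=
    fun y => by
      rw [Matrix.coe_units_inv]
      exact le_trans (le_max_right _ _) (hC.2 ⟨y, rfl⟩)
  have hC0 : 0 ≤ C := le_trans (norm_nonneg _) (hCA x)
  have hone : ‖(1 : Matrix (Fin m) (Fin m) ℝ)‖ = 1 := norm_one
  have hC1 : 1 ≤ C := by
    have e1 : (1 : Matrix (Fin m) (Fin m) ℝ) =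
        (A x : Matrix (Fin m) (Fin m) ℝ) *
          (((A x)⁻¹ : Matrix.GeneralLinearGroup (Fin m) ℝ) : Matrix (Fin m) (Fin m) ℝ) :=
      (Units.mul_inv _).symm
    have e2 : (1:ℝ) ≤ C * C := by
      calc (1:ℝ) = ‖(1 : Matrix (Fin m) (Fin m) ℝ)‖ := hone.symm
        _ ≤ ‖(A x : Matrix (Fin m) (Fin m) ℝ)‖ *
            ‖(((A x)⁻¹ : Matrix.GeneralLinearGroup (Fin m) ℝ) : Matrix (Fin m) (Fin m) ℝ)‖ := by
            rw [e1]; exact norm_mul_le _ _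
        _ ≤ C * C := mul_le_mul (hCA x) (hCAi x) (norm_nonneg _) hC0
    nlinarith
  have hCpos : (0:ℝ) < C := lt_of_lt_of_le one_pos hC1
  -- norm bounds for the cocycle and its inverse
  have hcn : ∀ (y : X) (n : ℕ), ‖cocycle f A y n‖ ≤ C ^ n := by
    intro y n
    induction n with
    | zero => simpa [cocycle] using hone.le
    | succ n ih =>
      calc ‖cocycle f A y (n+1)‖
          ≤ ‖(A (f^[n] y) : Matrix (Fin m) (Fin m) ℝ)‖ * ‖cocycle f A y n‖ := norm_mul_le _ _
        _ ≤ C * C ^ n := mul_le_mul (hCA _) ih (norm_nonneg _) hC0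
        _ = C ^ (n+1) := by ring
  have hicn : ∀ n : ℕ, ‖invCocycle f A x n‖ ≤ C ^ n := by
    intro n
    induction n with
    | zero => simpa [invCocycle] using hone.le
    | succ n ih =>
      calc ‖invCocycle f A x (n+1)‖
          ≤ ‖invCocycle f A x n‖ *
            ‖(((A (f^[n] x))⁻¹ : Matrix.GeneralLinearGroup (Fin m) ℝ) :
              Matrix (Fin m) (Fin m) ℝ)‖ := norm_mul_le _ _
        _ ≤ C ^ n * C := mul_le_mul ih (hCAi _) (norm_nonneg _) (pow_nonneg hC0 n)
        _ = C ^ (n+1) := by ring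
  have hpos : ∀ n : ℕ, (C ^ n)⁻¹ ≤ ‖cocycle f A x n‖ := by
    intro n
    have h1 : (1:ℝ) ≤ ‖cocycle f A x n‖ * C ^ n := by
      calc (1:ℝ) = ‖(1 : Matrix (Fin m) (Fin m) ℝ)‖ := hone.symm
        _ = ‖cocycle f A x n * invCocycle f A x n‖ := by rw [cocycle_mul_invCocycle]
        _ ≤ ‖cocycle f A x n‖ * ‖invCocycle f A x n‖ := norm_mul_le _ _
        _ ≤ ‖cocycle f A x n‖ * C ^ n :=
            mul_le_mul_of_nonneg_left (hicn n) (norm_nonneg _)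
    have hCn : (0:ℝ) < C ^ n := pow_pos hCpos n
    have : (1:ℝ)/(C ^ n) ≤ ‖cocycle f A x n‖ := (div_le_iff₀ hCn).mpr h1
    simpa [one_div] using this
  have hposn : ∀ n : ℕ, 0 < ‖cocycle f A x n‖ := fun n =>
    lt_of_lt_of_le (inv_pos.mpr (pow_pos hCpos n)) (hpos n)
  -- uniform bounds for the normalized log-norm
  have hub : ∀ n : ℕ, (1/(n:ℝ)) * Real.log ‖cocycle f A x n‖ ≤ Real.log C := by
    intro n
    rcases Nat.eq_zero_or_pos n with h | h
    · subst h
      simpa [cocycle, hone] using Real.log_nonneg hC1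
    · have h1 : Real.log ‖cocycle f A x n‖ ≤ (n:ℝ) * Real.log C := by
        calc Real.log ‖cocycle f A x n‖ ≤ Real.log (C ^ n) :=
            Real.log_le_log (hposn n) (hcn x n)
          _ = (n:ℝ) * Real.log C := by rw [Real.log_pow]
      have hn0 : (0:ℝ) < (n:ℝ) := by exact_mod_cast h
      calc (1/(n:ℝ)) * Real.log ‖cocycle f A x n‖
          ≤ (1/(n:ℝ)) * ((n:ℝ) * Real.log C) :=
            mul_le_mul_of_nonneg_left h1 (by positivity)
        _ = Real.log C := by field_simp
  have hlb : ∀ n : ℕ, -Real.log C ≤ (1/(n:ℝ)) * Real.log ‖cocycle f A x n‖ := by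
    intro n
    rcases Nat.eq_zero_or_pos n with h | h
    · subst h
      have := Real.log_nonneg hC1
      simpa [cocycle, hone] using by linarith
    · have h1 : -((n:ℝ) * Real.log C) ≤ Real.log ‖cocycle f A x n‖ := by
        have h2 := Real.log_le_log (inv_pos.mpr (pow_pos hCpos n)) (hpos n)
        rwa [Real.log_inv, Real.log_pow] at h2
      have hn0 : (0:ℝ) < (n:ℝ) := by exact_mod_cast h
      calc -Real.log C = (1/(n:ℝ)) * (-((n:ℝ) * Real.log C)) := by field_simp
        _ ≤ (1/(n:ℝ)) * Real.log ‖cocycle f A x n‖ :=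
            mul_le_mul_of_nonneg_left h1 (by positivity)
  have hbddAbove : Filter.IsBoundedUnder (· ≤ ·) Filter.atTop
      (fun n : ℕ => (1/(n:ℝ)) * Real.log ‖cocycle f A x n‖) :=
    Filter.isBoundedUnder_of ⟨Real.log C, hub⟩
  have hbddBelow : Filter.IsBoundedUnder (· ≥ ·) Filter.atTop
      (fun n : ℕ => (1/(n:ℝ)) * Real.log ‖cocycle f A x n‖) :=
    Filter.isBoundedUnder_of ⟨-Real.log C, hlb⟩
  -- index sequences tend to infinity
  have hn1 : Filter.Tendsto (fun k => P k + L k) Filter.atTop Filter.atTop :=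
    Filter.tendsto_atTop_mono (fun k => Nat.le_add_left (L k) (P k)) hL
  have hn2 : Filter.Tendsto (fun k => Q k + H k) Filter.atTop Filter.atTop :=
    Filter.tendsto_atTop_mono (fun k => Nat.le_add_left (H k) (Q k)) hH
  have hn1R : Filter.Tendsto (fun k => (P k : ℝ) + (L k : ℝ)) Filter.atTop Filter.atTop := by
    exact (tendsto_natCast_atTop_atTop (R := ℝ) |>.comp hn1).congr
      fun k => by simp
  have hn2R : Filter.Tendsto (fun k => (Q k : ℝ) + (H k : ℝ)) Filter.atTop Filter.atTop := by
    exact (tendsto_natCast_atTop_atTop (R := ℝ) |>.comp hn2).congr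
      fun k => by simp
  have hi1 : Filter.Tendsto (fun k => 1 / ((P k:ℝ) + (L k:ℝ))) Filter.atTop (nhds 0) := by
    simpa [one_div, Pi.inv_def] using hn1R.inv_tendsto_atTop
  have hi2 : Filter.Tendsto (fun k => 1 / ((Q k:ℝ) + (H k:ℝ))) Filter.atTop (nhds 0) := by
    simpa [one_div, Pi.inv_def] using hn2R.inv_tendsto_atTop
  have hL1 : Filter.Tendsto (fun k => (L k:ℝ) / ((P k:ℝ) + (L k:ℝ))) Filter.atTop (nhds 1) := by
    have h0 : Filter.Tendsto (fun k => 1 - (P k:ℝ)/((P k:ℝ)+(L k:ℝ)))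
        Filter.atTop (nhds 1) := by
      simpa using (tendsto_const_nhds (x := (1:ℝ))).sub hPL
    refine Filter.Tendsto.congr' ?_ h0
    filter_upwards [hL.eventually_ge_atTop 1] with k hk
    have h1 : (1:ℝ) ≤ (L k:ℝ) := by exact_mod_cast hk
    have hp : (0:ℝ) ≤ (P k:ℝ) := Nat.cast_nonneg _
    have hd : (0:ℝ) < (P k:ℝ) + (L k:ℝ) := by linarith
    field_simp
    ring
  have hH1 : Filter.Tendsto (fun k => (H k:ℝ) / ((Q k:ℝ) + (H k:ℝ))) Filter.atTop (nhds 1) := by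
    have h0 : Filter.Tendsto (fun k => 1 - (Q k:ℝ)/((Q k:ℝ)+(H k:ℝ)))
        Filter.atTop (nhds 1) := by
      simpa using (tendsto_const_nhds (x := (1:ℝ))).sub hQH
    refine Filter.Tendsto.congr' ?_ h0
    filter_upwards [hH.eventually_ge_atTop 1] with k hk
    have h1 : (1:ℝ) ≤ (H k:ℝ) := by exact_mod_cast hk
    have hp : (0:ℝ) ≤ (Q k:ℝ) := Nat.cast_nonneg _
    have hd : (0:ℝ) < (Q k:ℝ) + (H k:ℝ) := by linarith
    field_simp
    ring
  -- the two limiting bounds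
  have hlim1 : Filter.Tendsto (fun k => (Real.log D + (L k:ℝ) * b + (P k:ℝ) * Real.log C) /
      ((P k:ℝ) + (L k:ℝ))) Filter.atTop (nhds b) := by
    have h := ((hi1.const_mul (Real.log D)).add (hL1.const_mul b)).add
      (hPL.const_mul (Real.log C))
    have he : Real.log D * 0 + b * 1 + Real.log C * 0 = b := by ring
    rw [he] at h
    exact h.congr fun k => by ring
  have hlim2 : Filter.Tendsto (fun k => ((H k:ℝ) * a - (Q k:ℝ) * Real.log C - Real.log D) /
      ((Q k:ℝ) + (H k:ℝ))) Filter.atTop (nhds a) := by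
    have h := ((hH1.const_mul a).sub (hQH.const_mul (Real.log C))).sub
      (hi2.const_mul (Real.log D))
    have he : a * 1 - Real.log C * 0 - Real.log D * 0 = a := by ring
    rw [he] at h
    exact h.congr fun k => by ring
  -- pointwise estimates along the two subsequences
  have hest1 : ∀ k, (1/((P k + L k : ℕ):ℝ)) * Real.log ‖cocycle f A x (P k + L k)‖ ≤
      (Real.log D + (L k:ℝ) * b + (P k:ℝ) * Real.log C) / ((P k:ℝ) + (L k:ℝ)) := by
    intro k
    have hb1 : ‖cocycle f A x (P k + L k)‖ ≤ (D * Real.exp ((L k:ℝ) * b)) * C ^ (P k) := by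
      rw [cocycle_add]
      calc ‖cocycle f A (f^[P k] x) (L k) * cocycle f A x (P k)‖
          ≤ ‖cocycle f A (f^[P k] x) (L k)‖ * ‖cocycle f A x (P k)‖ := norm_mul_le _ _
        _ ≤ (D * Real.exp ((L k:ℝ) * b)) * C ^ (P k) :=
            mul_le_mul (hupper k) (hcn x (P k)) (norm_nonneg _) (by positivity)
    have hlog : Real.log ‖cocycle f A x (P k + L k)‖ ≤
        Real.log D + (L k:ℝ) * b + (P k:ℝ) * Real.log C := by
      have h2 := Real.log_le_log (hposn (P k + L k)) hb1
      rwa [Real.log_mul (by positivity) (pow_pos hCpos _).ne',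
        Real.log_mul hD.ne' (Real.exp_pos _).ne', Real.log_exp, Real.log_pow] at h2
    calc (1/((P k + L k : ℕ):ℝ)) * Real.log ‖cocycle f A x (P k + L k)‖
        ≤ (1/((P k + L k : ℕ):ℝ)) * (Real.log D + (L k:ℝ) * b + (P k:ℝ) * Real.log C) :=
          mul_le_mul_of_nonneg_left hlog (by positivity)
      _ = (Real.log D + (L k:ℝ) * b + (P k:ℝ) * Real.log C) / ((P k:ℝ) + (L k:ℝ)) := by
          push_cast; ring
  have hest2 : ∀ k, ((H k:ℝ) * a - (Q k:ℝ) * Real.log C - Real.log D) /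
      ((Q k:ℝ) + (H k:ℝ)) ≤
      (1/((Q k + H k : ℕ):ℝ)) * Real.log ‖cocycle f A x (Q k + H k)‖ := by
    intro k
    have heq : cocycle f A (f^[Q k] x) (H k) =
        cocycle f A x (Q k + H k) * invCocycle f A x (Q k) := by
      rw [cocycle_add f A x (Q k) (H k), mul_assoc, cocycle_mul_invCocycle, mul_one]
    have hb1 : D⁻¹ * Real.exp ((H k:ℝ) * a) ≤ ‖cocycle f A x (Q k + H k)‖ * C ^ (Q k) := by
      calc D⁻¹ * Real.exp ((H k:ℝ) * a) ≤ ‖cocycle f A (f^[Q k] x) (H k)‖ := hlower k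
        _ = ‖cocycle f A x (Q k + H k) * invCocycle f A x (Q k)‖ := by rw [heq]
        _ ≤ ‖cocycle f A x (Q k + H k)‖ * ‖invCocycle f A x (Q k)‖ := norm_mul_le _ _
        _ ≤ ‖cocycle f A x (Q k + H k)‖ * C ^ (Q k) :=
            mul_le_mul_of_nonneg_left (hicn (Q k)) (norm_nonneg _)
    have hb2 : D⁻¹ * Real.exp ((H k:ℝ) * a) / C ^ (Q k) ≤ ‖cocycle f A x (Q k + H k)‖ :=
      (div_le_iff₀ (pow_pos hCpos _)).mpr hb1
    have hlog : (H k:ℝ) * a - (Q k:ℝ) * Real.log C - Real.log D ≤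
        Real.log ‖cocycle f A x (Q k + H k)‖ := by
      have h2 := Real.log_le_log (by positivity) hb2
      rw [Real.log_div (by positivity) (pow_pos hCpos _).ne',
        Real.log_mul (inv_pos.mpr hD).ne' (Real.exp_pos _).ne',
        Real.log_inv, Real.log_exp, Real.log_pow] at h2
      linarith
    calc ((H k:ℝ) * a - (Q k:ℝ) * Real.log C - Real.log D) / ((Q k:ℝ) + (H k:ℝ))
        = (1/((Q k + H k : ℕ):ℝ)) * ((H k:ℝ) * a - (Q k:ℝ) * Real.log C - Real.log D) := by
          push_cast; ring
      _ ≤ (1/((Q k + H k : ℕ):ℝ)) * Real.log ‖cocycle f A x (Q k + H k)‖ :=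
          mul_le_mul_of_nonneg_left hlog (by positivity)
  -- liminf ≤ b
  have hliminf : Filter.atTop.liminf
      (fun n : ℕ => (1 / (n : ℝ)) * Real.log ‖cocycle f A x n‖) ≤ b := by
    refine le_of_forall_pos_le_add fun ε hε => ?_
    refine Filter.liminf_le_of_frequently_le ?_ hbddBelow
    have hev : ∀ᶠ k in Filter.atTop,
        (1/(((fun k => P k + L k) k : ℕ):ℝ)) *
          Real.log ‖cocycle f A x ((fun k => P k + L k) k)‖ ≤ b + ε := by
      filter_upwards [hlim1.eventually_le_const (lt_add_of_pos_right b hε)] with k hk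
      exact le_trans (hest1 k) hk
    exact hn1.frequently hev.frequently
  -- a ≤ limsup
  have hlimsup : a ≤ Filter.atTop.limsup
      (fun n : ℕ => (1 / (n : ℝ)) * Real.log ‖cocycle f A x n‖) := by
    refine le_of_forall_pos_le_add fun ε hε => ?_
    have h1 : a - ε ≤ Filter.atTop.limsup
        (fun n : ℕ => (1 / (n : ℝ)) * Real.log ‖cocycle f A x n‖) := by
      refine Filter.le_limsup_of_frequently_le ?_ hbddAbove
      have hev : ∀ᶠ k in Filter.atTop, a - ε ≤
          (1/(((fun k => Q k + H k) k : ℕ):ℝ)) *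
            Real.log ‖cocycle f A x ((fun k => Q k + H k) k)‖ := by
        filter_upwards [hlim2.eventually_const_le (sub_lt_self a hε)] with k hk
        exact le_trans hk (hest2 k)
      exact hn2.frequently hev.frequently
    linarith
  refine ⟨hlimsup, hliminf, ?_⟩
  intro hreg
  obtain ⟨χ, hχ⟩ := hreg
  have h1 := hχ.limsup_eq
  have h2 := hχ.liminf_eq
  rw [h1] at hlimsup
  rw [h2] at hliminf
  linarith
end
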